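/- arXiv:2412.09411 — 13 statements merged into one kernel-verified Lean document; each statement's English description precedes it below -/
import Mathlib

section
/- If L is a letter-Cartesian language (i.e., for every letter x and words α, β, γ, δ, if αxβ ∈ L and γxδ ∈ L then αxδ ∈ L), then the reduced language red(L) = {α ∈ L | no strict infix of α is in L} is also letter-Cartesian. -/
def StrictInfix {A : Type*} (u w : List A) : Prop :=
  ∃ s t : List A, w = s ++ u ++ t ∧ s ++ t ≠ []

def red {A : Type*} (L : Set (List A)) : Set (List A) :=
  {w ∈ L | ∀ u, StrictInfix u w → u ∉ L}

def LetterCartesian {A : Type*} (L : Set (List A)) : Prop :=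
  ∀ (x : A) (α β γ δ : List A),
    α ++ [x] ++ β ∈ L → γ ++ [x] ++ δ ∈ L → α ++ [x] ++ δ ∈ L

theorem red_letterCartesian {A : Type*} (L : Set (List A))
    (h : LetterCartesian L) : LetterCartesian (red L) := by
  intro x α β γ δ hab hgd
  obtain ⟨hab1, hab2⟩ := hab
  obtain ⟨hgd1, hgd2⟩ := hgd
  refine ⟨h x α β γ δ hab1 hgd1, ?_⟩
  rintro u ⟨s, t, heq, hne⟩ huL
  have heq' : α ++ ([x] ++ δ) = s ++ (u ++ t) := by
    simpa [List.append_assoc] using heq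
  rcases List.append_eq_append_iff.mp heq' with ⟨a', hs, hxd⟩ | ⟨c', hα, hut⟩
  · -- s = α ++ a', [x] ++ δ = a' ++ (u ++ t)
    cases a' with
    | nil =>
      simp only [List.nil_append] at hxd
      subst hs
      -- hxd : [x] ++ δ = u ++ t
      cases u with
      | nil =>
        exact hgd2 [] ⟨[], γ ++ [x] ++ δ, by simp, by simp⟩ huL
      | cons y u2 =>
        have hy : x = y := by
          have := congrArg (·.head?) hxd
          simpa using this
        subst hy
        have hδ : δ = u2 ++ t := by
          have := congrArg (·.tail) hxd
          simpa using this
        have huL' : ([] : List A) ++ [x] ++ u2 ∈ L := by simpa using huL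
        cases t with
        | nil =>
          have hsne : α ≠ [] := by simpa using hne
          have hxb : ([] : List A) ++ [x] ++ β ∈ L := h x [] u2 α β huL' hab1
          exact hab2 ([x] ++ β) ⟨α, [], by simp, by simpa using hsne⟩ (by simpa using hxb)
        | cons z t2 =>
          have hgu : γ ++ [x] ++ u2 ∈ L := h x γ δ [] u2 hgd1 huL'
          exact hgd2 (γ ++ [x] ++ u2)
            ⟨[], z :: t2, by simp [hδ, List.append_assoc], by simp⟩ hgu
    | cons y a'' =>
      injection hxd with hy hδ
      subst hy
      simp only [List.nil_append, List.append_eq] at hδ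
      exact hgd2 u ⟨γ ++ [x] ++ a'', t, by simp [hδ, List.append_assoc], by simp⟩ huL
  · -- α = s ++ c', u ++ t = c' ++ ([x] ++ δ)
    rcases List.append_eq_append_iff.mp hut with ⟨e, hc', ht⟩ | ⟨e, hu, hxd⟩
    · -- c' = u ++ e, t = e ++ ([x] ++ δ) : u infix of α
      exact hab2 u ⟨s, e ++ [x] ++ β, by simp [hα, hc', List.append_assoc], by simp⟩ huL
    · -- u = c' ++ e, [x] ++ δ = e ++ t
      cases e with
      | nil =>
        simp only [List.append_nil] at hu
        exact hab2 u ⟨s, [x] ++ β, by simp [hα, hu, List.append_assoc], by simp⟩ huL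
      | cons y e2 =>
        have hy : x = y := by
          have := congrArg (·.head?) hxd
          simpa using this
        subst hy
        have hδ : δ = e2 ++ t := by
          have := congrArg (·.tail) hxd
          simpa using this
        have huL' : c' ++ [x] ++ e2 ∈ L := by simpa [hu, List.append_assoc] using huL
        by_cases hst : s = []
        · have ht : t ≠ [] := by simpa [hst] using hne
          have hge : γ ++ [x] ++ e2 ∈ L := h x γ δ c' e2 hgd1 huL'
          exact hgd2 (γ ++ [x] ++ e2)
            ⟨[], t, by simp [hδ, List.append_assoc], by simpa using ht⟩ hge
        · have hcb : c' ++ [x] ++ β ∈ L := h x c' e2 α β huL' hab1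
          exact hab2 (c' ++ [x] ++ β)
            ⟨s, [], by simp [hα, List.append_assoc], by simpa using hst⟩ hcb
end

section
/- A finite language containing a word with a repeated letter is not letter-Cartesian. -/
theorem finite_repeated_not_letterCartesian {A : Type*} (L : Set (List A))
    (hfin : L.Finite)
    (hrep : ∃ (a : A) (β γ δ : List A), β ++ [a] ++ γ ++ [a] ++ δ ∈ L) :
    ¬ LetterCartesian L := by
  intro hC
  obtain ⟨a, β, γ, δ, hw⟩ := hrep
  -- pumping sequence of prefixes
  let g : ℕ → List A := fun n => Nat.rec β (fun _ p => p ++ [a] ++ γ) n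
  have hg : ∀ n, g n ++ [a] ++ γ ++ [a] ++ δ ∈ L := by
    intro n
    induction n with
    | zero => exact hw
    | succ n ih =>
      have h1 : (g n ++ [a] ++ γ) ++ [a] ++ δ ∈ L := by
        simpa [List.append_assoc] using ih
      have h2 : g n ++ [a] ++ (γ ++ [a] ++ δ) ∈ L := by
        simpa [List.append_assoc] using ih
      have := hC a (g n ++ [a] ++ γ) δ (g n) (γ ++ [a] ++ δ) h1 h2
      show (g n ++ [a] ++ γ) ++ [a] ++ γ ++ [a] ++ δ ∈ L
      simpa [List.append_assoc] using this
  have hlen : ∀ n, (g n).length = β.length + n * (1 + γ.length) := by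
    intro n
    induction n with
    | zero => simp [g]
    | succ n ih =>
      show (g n ++ [a] ++ γ).length = _
      simp [ih, Nat.succ_mul]
      ring
  have hinj : Function.Injective (fun n => g n ++ [a] ++ γ ++ [a] ++ δ) := by
    intro m n h
    have := congrArg List.length h
    simp [hlen, Nat.add_right_cancel_iff, Nat.add_left_cancel_iff] at this
    omega
  exact (Set.infinite_of_injective_forall_mem hinj (fun n => hg n)) hfin
end

section
/- Let ℓ be an odd positive integer, G = (V,E) a finite simple undirected graph with m edges, and G' the ℓ-subdivision of G obtained by replacing each edge by a path with ℓ−1 fresh internal vertices. Then the minimum size of a vertex cover of G' equals k + m(ℓ−1)/2, where k is the minimum size of a vertex cover of G. -/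
/-- The vertices of the `ℓ`-subdivision: original vertices, plus `ℓ - 1` fresh
internal vertices for each edge. -/
abbrev SubdivVertex (V : Type*) (ℓ : ℕ) (E : Finset (V × V)) :=
  V ⊕ ({p // p ∈ E} × Fin (ℓ - 1))

/-- The `i`-th vertex (for `i : Fin (ℓ+1)`) on the subdivision path replacing edge `e`:
position `0` is the tail, position `ℓ` is the head, and the positions in between are
the fresh internal vertices. -/
def subdivVert {V : Type*} (ℓ : ℕ) (E : Finset (V × V))
    (e : {p // p ∈ E}) (i : Fin (ℓ + 1)) : SubdivVertex V ℓ E :=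
  if h0 : (i : ℕ) = 0 then Sum.inl e.1.1
  else if hl : (i : ℕ) = ℓ then Sum.inl e.1.2
  else Sum.inr (e, ⟨(i : ℕ) - 1, by have := i.isLt; omega⟩)


lemma count_aux (P : ℕ → Prop) [DecidablePred P] :
    ∀ n a, (∀ j < n, P (a + j) ∨ P (a + j + 1)) →
      n / 2 ≤ ((Finset.Ico (a + 1) (a + n + 1)).filter P).card := by
  intro n
  induction n using Nat.strong_induction_on with
  | _ n ih =>
    intro a h
    match n, ih, h with
    | 0, _, _ => simp
    | 1, _, _ => simp
    | (m+2), ih, h =>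
      have h1 : P (a + 1) ∨ P (a + 1 + 1) := h 1 (by omega)
      have hne : ((Finset.Ico (a + 1) (a + 3)).filter P).Nonempty := by
        rcases h1 with h1 | h1
        · exact ⟨a + 1, Finset.mem_filter.2 ⟨Finset.mem_Ico.2 ⟨le_refl _, by omega⟩, h1⟩⟩
        · exact ⟨a + 2, Finset.mem_filter.2 ⟨Finset.mem_Ico.2 ⟨by omega, by omega⟩, h1⟩⟩
      have hIH : m / 2 ≤ ((Finset.Ico (a + 3) (a + m + 3)).filter P).card := by
        have := ih m (by omega) (a + 2) (fun j hj => by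
          have h2 := h (j + 2) (by omega)
          have e1 : a + (j + 2) = a + 2 + j := by omega
          rwa [e1] at h2)
        have e2 : a + 2 + 1 = a + 3 := by omega
        have e3 : a + 2 + m + 1 = a + m + 3 := by omega
        rwa [e2, e3] at this
      have hdisj : Disjoint ((Finset.Ico (a + 1) (a + 3)).filter P)
          ((Finset.Ico (a + 3) (a + m + 3)).filter P) :=
        Finset.disjoint_filter_filter (Finset.Ico_disjoint_Ico_consecutive _ _ _)
      have hsplit : ((Finset.Ico (a + 1) (a + m + 3)).filter P).card
          = ((Finset.Ico (a + 1) (a + 3)).filter P).card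
            + ((Finset.Ico (a + 3) (a + m + 3)).filter P).card := by
        rw [← Finset.card_union_of_disjoint hdisj, ← Finset.filter_union,
          Finset.Ico_union_Ico_eq_Ico (by omega) (by omega)]
      have hc1 : 1 ≤ ((Finset.Ico (a + 1) (a + 3)).filter P).card := Finset.card_pos.2 hne
      have egoal : a + (m + 2) + 1 = a + m + 3 := by omega
      rw [egoal]
      omega

lemma count_main (P : ℕ → Prop) [DecidablePred P] (ℓ : ℕ) (hpos : 0 < ℓ)
    (h : ∀ j < ℓ, P j ∨ P (j + 1)) :
    (ℓ - 1) / 2 ≤ ((Finset.Ico 1 ℓ).filter P).card := by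
  have := count_aux P (ℓ - 1) 0 (fun j hj => by simpa using h j (by omega))
  have e : 0 + (ℓ - 1) + 1 = ℓ := by omega
  rw [e] at this
  simpa using this

lemma count_strong (P : ℕ → Prop) [DecidablePred P] (ℓ : ℕ) (hodd : Odd ℓ)
    (h : ∀ j < ℓ, P j ∨ P (j + 1)) (h0 : ¬ P 0) (hl : ¬ P ℓ) :
    (ℓ - 1) / 2 + 1 ≤ ((Finset.Ico 1 ℓ).filter P).card := by
  obtain ⟨c, hc⟩ := hodd
  rcases Nat.lt_or_ge ℓ 3 with h3 | h3
  · have hℓ1 : ℓ = 1 := by omega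
    subst hℓ1
    rcases h 0 (by omega) with hP | hP
    · exact absurd hP h0
    · exact absurd (by simpa using hP) hl
  · have hP1 : P 1 := (h 0 (by omega)).resolve_left h0
    have hPl : P (ℓ - 1) := by
      have h4 := h (ℓ - 1) (by omega)
      have e : ℓ - 1 + 1 = ℓ := by omega
      rw [e] at h4
      exact h4.resolve_right hl
    have hmid := count_aux P (ℓ - 3) 1 (fun j hj => h (1 + j) (by omega))
    have e : 1 + (ℓ - 3) + 1 = ℓ - 1 := by omega
    rw [e, show (1:ℕ) + 1 = 2 from rfl] at hmid
    set S := (Finset.Ico 2 (ℓ - 1)).filter P with hS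
    have hsub : insert 1 (insert (ℓ - 1) S) ⊆ (Finset.Ico 1 ℓ).filter P := by
      intro x hx
      simp only [Finset.mem_insert, hS, Finset.mem_filter, Finset.mem_Ico] at hx ⊢
      rcases hx with rfl | rfl | ⟨⟨h1', h2'⟩, h3'⟩
      · exact ⟨⟨le_refl _, by omega⟩, hP1⟩
      · exact ⟨⟨by omega, by omega⟩, hPl⟩
      · exact ⟨⟨by omega, by omega⟩, h3'⟩
    have hln : ℓ - 1 ∉ S := by
      intro hmem
      have := Finset.mem_Ico.1 (Finset.mem_filter.1 hmem).1
      omega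
    have h1n : 1 ∉ insert (ℓ - 1) S := by
      intro hmem
      rcases Finset.mem_insert.1 hmem with h' | h'
      · omega
      · have := Finset.mem_Ico.1 (Finset.mem_filter.1 h').1
        omega
    have hcard : (insert 1 (insert (ℓ - 1) S)).card = S.card + 2 := by
      rw [Finset.card_insert_of_notMem h1n, Finset.card_insert_of_notMem hln]
    have hle := Finset.card_le_card hsub
    omega

lemma card_range_parity (r : ℕ) (hr : r < 2) :
    ∀ n, ((Finset.range n).filter (fun t => t % 2 = r)).card = (n + 1 - r) / 2 := by
  intro n
  induction n with
  | zero => simp only [Finset.range_zero, Finset.filter_empty, Finset.card_empty]; omega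
  | succ n ih =>
    rw [Finset.range_add_one, Finset.filter_insert]
    by_cases h : n % 2 = r
    · rw [if_pos h, Finset.card_insert_of_notMem (by simp)]
      omega
    · rw [if_neg h]
      omega

lemma card_fin_parity (n r : ℕ) (hr : r < 2) :
    ((Finset.univ : Finset (Fin n)).filter (fun t : Fin n => t.val % 2 = r)).card
      = (n + 1 - r) / 2 := by
  rw [← card_range_parity r hr n]
  refine Finset.card_bij (fun (t : Fin n) _ => t.val) ?_ ?_ ?_
  · intro t ht
    simp only [Finset.mem_filter, Finset.mem_range, Finset.mem_univ, true_and] at ht ⊢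
    exact ⟨t.isLt, ht⟩
  · intro a _ b _ hab
    exact Fin.val_injective hab
  · intro j hj
    simp only [Finset.mem_filter, Finset.mem_range] at hj
    exact ⟨⟨j, hj.1⟩, Finset.mem_filter.2 ⟨Finset.mem_univ _, hj.2⟩, rfl⟩

def posn {V : Type*} (ℓ : ℕ) (E : Finset (V × V)) (e : {p // p ∈ E}) (j : ℕ) :
    SubdivVertex V ℓ E :=
  if h : 0 < j ∧ j < ℓ then Sum.inr (e, ⟨j - 1, by omega⟩)
  else if j = 0 then Sum.inl e.1.1 else Sum.inl e.1.2

lemma subdiv_eq_posn {V : Type*} {ℓ : ℕ} {E : Finset (V × V)}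
    (e : {p // p ∈ E}) (i : Fin (ℓ + 1)) :
    subdivVert ℓ E e i = posn ℓ E e i.val := by
  have := i.isLt
  unfold subdivVert posn
  split_ifs <;> first | rfl | omega

lemma posn_zero {V : Type*} {ℓ : ℕ} {E : Finset (V × V)} (e : {p // p ∈ E}) :
    posn ℓ E e 0 = Sum.inl e.1.1 := by
  unfold posn
  rw [dif_neg (by omega), if_pos rfl]

lemma posn_last {V : Type*} {ℓ : ℕ} {E : Finset (V × V)} (hpos : 0 < ℓ) (e : {p // p ∈ E}) :
    posn ℓ E e ℓ = Sum.inl e.1.2 := by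
  unfold posn
  rw [dif_neg (by omega), if_neg (by omega)]

lemma posn_inr {V : Type*} {ℓ : ℕ} {E : Finset (V × V)} (e : {p // p ∈ E})
    {j : ℕ} (h1 : 0 < j) (h2 : j < ℓ) :
    posn ℓ E e j = Sum.inr (e, ⟨j - 1, by omega⟩) := by
  unfold posn
  rw [dif_pos ⟨h1, h2⟩]

theorem vertex_cover_subdivision {V : Type*} [Fintype V] [DecidableEq V]
    (ℓ : ℕ) (hodd : Odd ℓ) (hpos : 0 < ℓ)
    (E : Finset (V × V))
    (hirr : ∀ p ∈ E, p.1 ≠ p.2)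
    (hanti : ∀ p ∈ E, (p.2, p.1) ∉ E)
    (k : ℕ)
    (hk : IsLeast {n : ℕ | ∃ C : Finset V,
      (∀ p ∈ E, p.1 ∈ C ∨ p.2 ∈ C) ∧ C.card = n} k) :
    IsLeast {n : ℕ | ∃ D : Finset (SubdivVertex V ℓ E),
      (∀ (e : {p // p ∈ E}) (i : Fin ℓ),
        subdivVert ℓ E e i.castSucc ∈ D ∨ subdivVert ℓ E e i.succ ∈ D) ∧
      D.card = n}
      (k + E.card * ((ℓ - 1) / 2)) := by
  classical
  obtain ⟨c, hc⟩ := hodd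
  obtain ⟨C, hCcov, hCcard⟩ := hk.1
  constructor
  · -- membership: construct an explicit cover of the subdivision
    set q : {p // p ∈ E} → Fin (ℓ - 1) → Prop :=
      fun e t => if e.1.1 ∈ C then t.val % 2 = 1 else t.val % 2 = 0 with hq
    set D : Finset (SubdivVertex V ℓ E) :=
      C.image Sum.inl ∪ E.attach.biUnion (fun e =>
        (Finset.univ.filter (q e)).image (fun t => Sum.inr (e, t))) with hD
    have hinl : ∀ w : V, Sum.inl w ∈ D ↔ w ∈ C := by
      intro w
      simp [hD]
    have hinr : ∀ (e : {p // p ∈ E}) (t : Fin (ℓ - 1)), Sum.inr (e, t) ∈ D ↔ q e t := by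
      intro e t
      simp [hD]
    refine ⟨D, ?_, ?_⟩
    · intro e i
      rw [subdiv_eq_posn, subdiv_eq_posn, Fin.coe_castSucc, Fin.val_succ]
      have hiℓ := i.isLt
      by_cases huC : e.1.1 ∈ C
      · by_cases h0 : i.val = 0
        · left; rw [h0, posn_zero]; exact (hinl _).2 huC
        · by_cases hl : i.val + 1 = ℓ
          · left
            rw [posn_inr e (by omega) (by omega), hinr]
            simp only [hq, if_pos huC]
            omega
          · by_cases hp : i.val % 2 = 1
            · right
              rw [posn_inr e (by omega) (by omega), hinr]
              simp only [hq, if_pos huC]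
              omega
            · left
              rw [posn_inr e (by omega) (by omega), hinr]
              simp only [hq, if_pos huC]
              omega
      · have hvC : e.1.2 ∈ C := (hCcov e.1 e.2).resolve_left huC
        by_cases hl : i.val + 1 = ℓ
        · right; rw [hl, posn_last hpos]; exact (hinl _).2 hvC
        · by_cases h0 : i.val = 0
          · right
            rw [posn_inr e (by omega) (by omega), hinr]
            simp only [hq, if_neg huC]
            omega
          · by_cases hp : i.val % 2 = 0
            · right
              rw [posn_inr e (by omega) (by omega), hinr]
              simp only [hq, if_neg huC]
              omega
            · left
              rw [posn_inr e (by omega) (by omega), hinr]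
              simp only [hq, if_neg huC]
              omega
    · -- cardinality of the constructed cover
      have hdisj : Disjoint (C.image Sum.inl) (E.attach.biUnion (fun e =>
          (Finset.univ.filter (q e)).image (fun t => Sum.inr (e, t)))) := by
        rw [Finset.disjoint_left]
        rintro x hx hx'
        simp only [Finset.mem_image, Finset.mem_biUnion] at hx hx'
        obtain ⟨a, _, rfl⟩ := hx
        obtain ⟨e, _, t, _, h⟩ := hx'
        exact absurd h (by simp)
      have hpair : ∀ e ∈ E.attach, ∀ e' ∈ E.attach, e ≠ e' →
          Disjoint ((Finset.univ.filter (q e)).image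
              (fun t => (Sum.inr (e, t) : SubdivVertex V ℓ E)))
            ((Finset.univ.filter (q e')).image (fun t => Sum.inr (e', t))) := by
        intro e _ e' _ hne
        rw [Finset.disjoint_left]
        rintro x hx hx'
        simp only [Finset.mem_image] at hx hx'
        obtain ⟨t, _, rfl⟩ := hx
        obtain ⟨t', _, h⟩ := hx'
        simp only [Sum.inr.injEq, Prod.mk.injEq] at h
        exact hne h.1.symm
      have hone : ∀ e ∈ E.attach, ((Finset.univ.filter (q e)).image
          (fun t => (Sum.inr (e, t) : SubdivVertex V ℓ E))).card = (ℓ - 1) / 2 := by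
        intro e _
        rw [Finset.card_image_of_injective _
          (show Function.Injective (fun t => (Sum.inr (e, t) : SubdivVertex V ℓ E)) from
            fun a b hab => by simpa using hab)]
        by_cases huC : e.1.1 ∈ C
        · have hfe : Finset.univ.filter (q e)
              = Finset.univ.filter (fun t : Fin (ℓ - 1) => t.val % 2 = 1) := by
            apply Finset.filter_congr
            intro t _
            simp [hq, huC]
          rw [hfe, card_fin_parity _ 1 (by omega)]
          omega
        · have hfe : Finset.univ.filter (q e)
              = Finset.univ.filter (fun t : Fin (ℓ - 1) => t.val % 2 = 0) := by
            apply Finset.filter_congr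
            intro t _
            simp [hq, huC]
          rw [hfe, card_fin_parity _ 0 (by omega)]
          omega
      rw [hD, Finset.card_union_of_disjoint hdisj,
        Finset.card_image_of_injective _ Sum.inl_injective, hCcard,
        Finset.card_biUnion hpair, Finset.sum_congr rfl hone, Finset.sum_const,
        Finset.card_attach, smul_eq_mul]
  · -- lower bound
    rintro n ⟨D, hDcov, rfl⟩
    have hPe : ∀ (e : {p // p ∈ E}) (j : ℕ), j < ℓ →
        posn ℓ E e j ∈ D ∨ posn ℓ E e (j + 1) ∈ D := by
      intro e j hj
      have h := hDcov e ⟨j, hj⟩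
      rwa [subdiv_eq_posn, subdiv_eq_posn, Fin.coe_castSucc, Fin.val_succ] at h
    set F : Finset {p // p ∈ E} :=
      E.attach.filter (fun e => e.1.1 ∉ D.toLeft ∧ e.1.2 ∉ D.toLeft) with hF
    have hFsub : F ⊆ E.attach := Finset.filter_subset _ _
    have hcov' : ∀ p ∈ E, p.1 ∈ D.toLeft ∪ F.image (fun e => e.1.1)
        ∨ p.2 ∈ D.toLeft ∪ F.image (fun e => e.1.1) := by
      intro p hp
      by_cases h1 : p.1 ∈ D.toLeft
      · exact Or.inl (Finset.mem_union_left _ h1)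
      by_cases h2 : p.2 ∈ D.toLeft
      · exact Or.inr (Finset.mem_union_left _ h2)
      · refine Or.inl (Finset.mem_union_right _ ?_)
        exact Finset.mem_image.2
          ⟨⟨p, hp⟩, Finset.mem_filter.2 ⟨Finset.mem_attach _ _, h1, h2⟩, rfl⟩
    have hk' : k ≤ D.toLeft.card + F.card := by
      calc k ≤ (D.toLeft ∪ F.image (fun e => e.1.1)).card := hk.2 ⟨_, hcov', rfl⟩
        _ ≤ D.toLeft.card + (F.image (fun e => e.1.1)).card := Finset.card_union_le _ _
        _ ≤ D.toLeft.card + F.card := by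
            have := Finset.card_image_le (s := F) (f := fun e => e.1.1)
            omega
    have hfib : ∀ e ∈ E.attach,
        (ℓ - 1) / 2 + (if e ∈ F then 1 else 0)
          ≤ (D.toRight.filter (fun x => x.1 = e)).card := by
      intro e _
      have hle : ((Finset.Ico 1 ℓ).filter (fun j => posn ℓ E e j ∈ D)).card
          ≤ (D.toRight.filter (fun x => x.1 = e)).card := by
        rcases Nat.lt_or_ge ℓ 2 with h2 | h2
        · have hempty : Finset.Ico 1 ℓ = ∅ := Finset.Ico_eq_empty (by omega)
          simp [hempty]
        · refine Finset.card_le_card_of_injOn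
            (fun j => (e, ⟨(j - 1) % (ℓ - 1), Nat.mod_lt _ (by omega)⟩)) ?_ ?_
          · intro j hj
            simp only [Finset.mem_coe, Finset.mem_filter, Finset.mem_Ico] at hj
            obtain ⟨⟨hj1, hj2⟩, hjP⟩ := hj
            rw [posn_inr e (by omega) hj2] at hjP
            refine Finset.mem_filter.2 ⟨Finset.mem_toRight.2 ?_, rfl⟩
            have hmod : (j - 1) % (ℓ - 1) = j - 1 := Nat.mod_eq_of_lt (by omega)
            convert hjP using 4
          · intro a ha b hb hab
            simp only [Finset.coe_filter, Set.mem_setOf_eq, Finset.mem_Ico] at ha hb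
            have h1 := congrArg (fun x : {p // p ∈ E} × Fin (ℓ - 1) => (x.2 : ℕ)) hab
            simp only at h1
            rw [Nat.mod_eq_of_lt (by omega), Nat.mod_eq_of_lt (by omega)] at h1
            omega
      by_cases heF : e ∈ F
      · rw [if_pos heF]
        have hmem := Finset.mem_filter.1 heF
        have hnu : ¬ posn ℓ E e 0 ∈ D := by
          rw [posn_zero]
          intro hmm
          exact hmem.2.1 (Finset.mem_toLeft.2 hmm)
        have hnv : ¬ posn ℓ E e ℓ ∈ D := by
          rw [posn_last hpos]
          intro hmm
          exact hmem.2.2 (Finset.mem_toLeft.2 hmm)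
        have := count_strong (fun j => posn ℓ E e j ∈ D) ℓ ⟨c, hc⟩ (hPe e) hnu hnv
        omega
      · rw [if_neg heF]
        have := count_main (fun j => posn ℓ E e j ∈ D) ℓ hpos (hPe e)
        omega
    have hsum : ∑ e ∈ E.attach, (D.toRight.filter (fun x => x.1 = e)).card
        = D.toRight.card :=
      (Finset.card_eq_sum_card_fiberwise (fun x _ => Finset.mem_attach _ _)).symm
    have hsum2 : ∑ e ∈ E.attach, ((ℓ - 1) / 2 + (if e ∈ F then 1 else 0))
        ≤ D.toRight.card := by
      rw [← hsum]
      exact Finset.sum_le_sum hfib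
    have hsum3 : ∑ e ∈ E.attach, ((ℓ - 1) / 2 + (if e ∈ F then 1 else 0))
        = E.card * ((ℓ - 1) / 2) + F.card := by
      rw [Finset.sum_add_distrib, Finset.sum_const, Finset.card_attach, smul_eq_mul,
        ← Finset.card_filter]
      congr 1
      rw [Finset.filter_mem_eq_inter, Finset.inter_eq_right.2 hFsub]
    have htot : D.toLeft.card + D.toRight.card = D.card :=
      Finset.card_toLeft_add_card_toRight (u := D)
    omega
end

section
/- Let L' be a reduced language containing a word of the form βaγaδ with the maximal-gap property: no word of L' has two occurrences of a common letter separated by a gap strictly longer than |γ|. If β ≠ ε and δ ≠ ε, then L' is four-legged: there exist a letter x and nonempty words α', β', γ', δ' with α'xβ' ∈ L', γ'xδ' ∈ L', and α'xδ' ∉ L'. -/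
def Reduced {A : Type*} (L : Set (List A)) : Prop :=
  ∀ w ∈ L, ∀ u, StrictInfix u w → u ∉ L

def FourLegged {A : Type*} (L : Set (List A)) : Prop :=
  Reduced L ∧ ∃ (x : A) (α β γ δ : List A),
    α ≠ [] ∧ β ≠ [] ∧ γ ≠ [] ∧ δ ≠ [] ∧
    α ++ [x] ++ β ∈ L ∧ γ ++ [x] ++ δ ∈ L ∧ α ++ [x] ++ δ ∉ L

theorem maximal_gap_fourLegged {A : Type*} (L' : Set (List A))
    (hred : Reduced L')
    (a : A) (β γ δ : List A)
    (hmem : β ++ [a] ++ γ ++ [a] ++ δ ∈ L')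
    (hmax : ∀ (a' : A) (β' γ' δ' : List A),
      β' ++ [a'] ++ γ' ++ [a'] ++ δ' ∈ L' → γ'.length ≤ γ.length)
    (hβ : β ≠ []) (hδ : δ ≠ []) :
    FourLegged L' := by
  refine ⟨hred, a, β ++ [a] ++ γ, δ, β, γ ++ [a] ++ δ, by simp, hδ, hβ, by simp, ?_, ?_, ?_⟩
  · simpa [List.append_assoc] using hmem
  · simpa [List.append_assoc] using hmem
  · intro h
    have := hmax a β (γ ++ [a] ++ γ) δ (by simpa [List.append_assoc] using h)
    simp at this
end

section
/- Let L be a reduced language and suppose L is four-legged with some body x ∈ Σ: there exist nonempty words α', β', γ', δ' with α'xβ' ∈ L, γ'xδ' ∈ L, and α'xδ' ∉ L. Then L has stable legs with body x: there exist nonempty words α, β, γ, δ such that αxβ ∈ L, γxδ ∈ L, and no infix of αxδ (including αxδ itself) is in L. -/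
section StableLegsAux

variable {A : Type*}

/-- Left legs. -/
def PmAux (L : Set (List A)) (x : A) (ζ : List A) : Prop :=
  ζ ≠ [] ∧ ∃ η, η ≠ [] ∧ ζ ++ [x] ++ η ∈ L

/-- Right legs. -/
def QmAux (L : Set (List A)) (x : A) (η : List A) : Prop :=
  η ≠ [] ∧ ∃ ζ, ζ ≠ [] ∧ ζ ++ [x] ++ η ∈ L

/-- Suffix-minimal left legs. -/
def PsAux (L : Set (List A)) (x : A) (ζ : List A) : Prop :=
  PmAux L x ζ ∧ ∀ w, w <:+ ζ → w ≠ ζ → ¬ PmAux L x w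

/-- Prefix-minimal right legs. -/
def QsAux (L : Set (List A)) (x : A) (η : List A) : Prop :=
  QmAux L x η ∧ ∀ w, w <+: η → w ≠ η → ¬ QmAux L x w

lemma exists_psAux (L : Set (List A)) (x : A) :
    ∀ n (ζ : List A), ζ.length ≤ n → PmAux L x ζ → ∃ z, z <:+ ζ ∧ PsAux L x z := by
  intro n
  induction n with
  | zero =>
    intro ζ hl hp
    exact absurd (List.length_eq_zero_iff.mp (Nat.le_zero.mp hl)) hp.1
  | succ n ih =>
    intro ζ hl hp
    by_cases h : ∃ w, w <:+ ζ ∧ w ≠ ζ ∧ PmAux L x w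
    · obtain ⟨w, hw, hne, hpw⟩ := h
      have hlt : w.length < ζ.length :=
        lt_of_le_of_ne hw.length_le (fun e => hne (hw.eq_of_length e))
      obtain ⟨z, hz, hps⟩ := ih w (by omega) hpw
      exact ⟨z, hz.trans hw, hps⟩
    · push_neg at h
      exact ⟨ζ, List.suffix_refl ζ, hp, fun w hw hne => h w hw hne⟩

lemma exists_qsAux (L : Set (List A)) (x : A) :
    ∀ n (η : List A), η.length ≤ n → QmAux L x η → ∃ z, z <+: η ∧ QsAux L x z := by
  intro n
  induction n with
  | zero =>
    intro η hl hp
    exact absurd (List.length_eq_zero_iff.mp (Nat.le_zero.mp hl)) hp.1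
  | succ n ih =>
    intro η hl hp
    by_cases h : ∃ w, w <+: η ∧ w ≠ η ∧ QmAux L x w
    · obtain ⟨w, hw, hne, hpw⟩ := h
      have hlt : w.length < η.length :=
        lt_of_le_of_ne hw.length_le (fun e => hne (hw.eq_of_length e))
      obtain ⟨z, hz, hps⟩ := ih w (by omega) hpw
      exact ⟨z, hz.trans hw, hps⟩
    · push_neg at h
      exact ⟨η, List.prefix_refl η, hp, fun w hw hne => h w hw hne⟩

/-- Decomposition of an infix of `ζ ++ [x] ++ η`. -/
lemma infix_decompAux (x : A) (u ζ η : List A) (h : u <:+: ζ ++ [x] ++ η) :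
    u <:+: ζ ∨ u <:+: η ∨ ∃ a d, a <:+ ζ ∧ d <+: η ∧ u = a ++ [x] ++ d := by
  obtain ⟨s, t, hst⟩ := h
  have h1 : s ++ (u ++ t) = ζ ++ ([x] ++ η) := by
    simpa [List.append_assoc] using hst
  rcases List.append_eq_append_iff.mp h1 with ⟨a', ha1, ha2⟩ | ⟨c', hc1, hc2⟩
  · -- ζ = s ++ a', u ++ t = a' ++ ([x] ++ η)
    rcases List.append_eq_append_iff.mp ha2 with ⟨b, hb1, hb2⟩ | ⟨c, hc1', hc2'⟩
    · -- a' = u ++ b, t = b ++ ([x] ++ η)  : u infix of ζ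
      left
      exact ⟨s, b, by rw [ha1, hb1]; simp [List.append_assoc]⟩
    · -- u = a' ++ c, [x] ++ η = c ++ t
      cases c with
      | nil =>
        left
        simp only [List.append_nil] at hc1'
        exact ⟨s, [], by simp [ha1, hc1']⟩
      | cons y c' =>
        right; right
        have hy : y = x ∧ η = c' ++ t := by
          have := hc2'.symm
          simp only [List.cons_append, List.singleton_append, List.cons.injEq] at this
          exact ⟨this.1, this.2.symm⟩
        exact ⟨a', c', ⟨s, ha1.symm⟩, ⟨t, hy.2.symm⟩, by rw [hc1', hy.1]; simp⟩
  · -- s = ζ ++ c', [x] ++ η = c' ++ (u ++ t)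
    cases c' with
    | nil =>
      simp only [List.nil_append] at hc2
      -- [x] ++ η = u ++ t
      cases u with
      | nil => left; exact ⟨[], ζ, by simp⟩
      | cons y u' =>
        right; right
        have hy : y = x ∧ η = u' ++ t := by
          have := hc2
          simp only [List.cons_append, List.singleton_append, List.nil_append,
            List.cons.injEq] at this
          exact ⟨this.1.symm, this.2⟩
        exact ⟨[], u', ⟨ζ, by simp⟩, ⟨t, hy.2.symm⟩, by simp [hy.1]⟩
    | cons y c'' =>
      right; left
      have hy : η = c'' ++ (u ++ t) := by
        have := hc2
        simp only [List.cons_append, List.singleton_append, List.cons.injEq] at this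
        exact this.2
      exact ⟨c'', t, by rw [hy]; simp [List.append_assoc]⟩

/-- A non-L pair of minimal legs gives stable legs. -/
lemma stable_claimAux (L : Set (List A)) (hred : Reduced L) (x : A)
    (ζ η η₀ ζ₀ : List A)
    (hη₀ : η₀ ≠ []) (hζ₀ : ζ₀ ≠ [])
    (h1 : ζ ++ [x] ++ η₀ ∈ L) (h2 : ζ₀ ++ [x] ++ η ∈ L)
    (hPs : PsAux L x ζ) (hQs : QsAux L x η) (hne : ζ ++ [x] ++ η ∉ L) :
    ∀ u, u <:+: ζ ++ [x] ++ η → u ∉ L := by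
  intro u hu huL
  rcases infix_decompAux x u ζ η hu with hinf | hinf | ⟨a, d, ha, hd, rfl⟩
  · -- u infix of ζ : strict infix of ζ ++ [x] ++ η₀ ∈ L
    obtain ⟨s, t, hst⟩ := hinf
    have : StrictInfix u (ζ ++ [x] ++ η₀) :=
      ⟨s, t ++ [x] ++ η₀, by rw [← hst]; simp [List.append_assoc], by simp⟩
    exact hred _ h1 u this huL
  · -- u infix of η : strict infix of ζ₀ ++ [x] ++ η ∈ L
    obtain ⟨s, t, hst⟩ := hinf
    have : StrictInfix u (ζ₀ ++ [x] ++ η) :=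
      ⟨ζ₀ ++ [x] ++ s, t, by rw [← hst]; simp [List.append_assoc], by simp [hζ₀]⟩
    exact hred _ h2 u this huL
  · -- u = a ++ [x] ++ d
    rcases eq_or_ne a [] with rfl | hane
    · -- u = [x] ++ d, strict infix of ζ₀ ++ [x] ++ η
      obtain ⟨e, he⟩ := hd
      have : StrictInfix ([] ++ [x] ++ d) (ζ₀ ++ [x] ++ η) :=
        ⟨ζ₀, e, by rw [← he]; simp [List.append_assoc], by simp [hζ₀]⟩
      exact hred _ h2 _ this huL
    rcases eq_or_ne d [] with rfl | hdne
    · -- u = a ++ [x], strict infix of ζ ++ [x] ++ η₀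
      obtain ⟨p, hp⟩ := ha
      have : StrictInfix (a ++ [x] ++ []) (ζ ++ [x] ++ η₀) :=
        ⟨p, η₀, by rw [← hp]; simp [List.append_assoc], by simp [hη₀]⟩
      exact hred _ h1 _ this huL
    · -- both nonempty: a is a left leg, d a right leg
      have hPa : PmAux L x a := ⟨hane, d, hdne, huL⟩
      have haζ : a = ζ := by
        by_contra hne'
        exact hPs.2 a ha hne' hPa
      have hQd : QmAux L x d := ⟨hdne, a, hane, huL⟩
      have hdη : d = η := by
        by_contra hne'
        exact hQs.2 d hd hne' hQd
      rw [haζ, hdη] at huL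
      exact hne huL

end StableLegsAux

theorem stable_legs {A : Type*} (L : Set (List A)) (hred : Reduced L)
    (x : A)
    (hfl : ∃ α' β' γ' δ' : List A,
      α' ≠ [] ∧ β' ≠ [] ∧ γ' ≠ [] ∧ δ' ≠ [] ∧
      α' ++ [x] ++ β' ∈ L ∧ γ' ++ [x] ++ δ' ∈ L ∧ α' ++ [x] ++ δ' ∉ L) :
    ∃ α β γ δ : List A,
      α ≠ [] ∧ β ≠ [] ∧ γ ≠ [] ∧ δ ≠ [] ∧
      α ++ [x] ++ β ∈ L ∧ γ ++ [x] ++ δ ∈ L ∧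
      ∀ u : List A, u <:+: (α ++ [x] ++ δ) → u ∉ L := by
  obtain ⟨α', β', γ', δ', hα', hβ', hγ', hδ', hab, hgd, hnad⟩ := hfl
  by_cases hstar : ∃ ζ η, PsAux L x ζ ∧ QsAux L x η ∧ ζ ++ [x] ++ η ∉ L
  · obtain ⟨ζ, η, hPs, hQs, hne⟩ := hstar
    obtain ⟨hζne, η₀, hη₀, h1⟩ := hPs.1
    obtain ⟨hηne, ζ₀, hζ₀, h2⟩ := hQs.1
    exact ⟨ζ, η₀, ζ₀, η, hζne, hη₀, hζ₀, hηne, h1, h2,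
      stable_claimAux L hred x ζ η η₀ ζ₀ hη₀ hζ₀ h1 h2 hPs hQs hne⟩
  · exfalso
    push_neg at hstar
    -- every L-word γ ++ [x] ++ δ with nonempty legs has both legs minimal
    have key : ∀ γ δ : List A, γ ≠ [] → δ ≠ [] → γ ++ [x] ++ δ ∈ L →
        PsAux L x γ ∧ QsAux L x δ := by
      intro γ δ hγ hδ hmem
      obtain ⟨g, hg, hPs⟩ := exists_psAux L x γ.length γ le_rfl ⟨hγ, δ, hδ, hmem⟩
      obtain ⟨d, hd, hQs⟩ := exists_qsAux L x δ.length δ le_rfl ⟨hδ, γ, hγ, hmem⟩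
      have hin : g ++ [x] ++ d ∈ L := hstar g d hPs hQs
      obtain ⟨p, hp⟩ := hg
      obtain ⟨q, hq⟩ := hd
      by_cases hpq : p = [] ∧ q = []
      · obtain ⟨rfl, rfl⟩ := hpq
        simp only [List.nil_append, List.append_nil] at hp hq
        rw [← hp, ← hq]
        exact ⟨hPs, hQs⟩
      · exfalso
        have hstrict : StrictInfix (g ++ [x] ++ d) (γ ++ [x] ++ δ) := by
          refine ⟨p, q, by rw [← hp, ← hq]; simp [List.append_assoc], ?_⟩
          intro hc
          exact hpq (List.append_eq_nil_iff.mp hc)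
        exact hred _ hmem _ hstrict hin
    have hPα : PsAux L x α' := (key α' β' hα' hβ' hab).1
    have hQδ : QsAux L x δ' := (key γ' δ' hγ' hδ' hgd).2
    exact hnad (hstar α' δ' hPα hQδ)
end

section
/- Let L' be a reduced language containing a word aγaδ (a ∈ Σ, γ, δ ∈ Σ*) and containing some infix of γaγ. Then L' contains a word of the form γ₁aγ₂ where γ₁ is a nonempty suffix of γ and γ₂ is a nonempty prefix of γ. -/
theorem infix_of_gag {A : Type*} (L' : Set (List A)) (hred : Reduced L')
    (a : A) (γ δ : List A)
    (hmem : [a] ++ γ ++ [a] ++ δ ∈ L')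
    (hinf : ∃ u : List A, u <:+: (γ ++ [a] ++ γ) ∧ u ∈ L') :
    ∃ γ₁ γ₂ : List A, γ₁ ≠ [] ∧ γ₂ ≠ [] ∧
      γ₁ <:+ γ ∧ γ₂ <+: γ ∧ γ₁ ++ [a] ++ γ₂ ∈ L' := by
  obtain ⟨u, ⟨s, t, heq⟩, huL⟩ := hinf
  have key : (∃ s' t', s' ++ u ++ t' = γ ++ [a]) ∨ (∃ s' t', s' ++ u ++ t' = [a] ++ γ) ∨
      ∃ γ₁ γ₂, γ₁ ≠ [] ∧ γ₂ ≠ [] ∧ γ₁ <:+ γ ∧ γ₂ <+: γ ∧ u = γ₁ ++ [a] ++ γ₂ := by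
    have heq' : s ++ (u ++ t) = (γ ++ [a]) ++ γ := by
      rw [← heq]; simp [List.append_assoc]
    rcases List.append_eq_append_iff.mp heq' with ⟨a', h1, h2⟩ | ⟨c', h1, h2⟩
    · rcases List.append_eq_append_iff.mp h2 with ⟨b', hb1, hb2⟩ | ⟨c', hc1, hc2⟩
      · exact Or.inl ⟨s, b', by rw [h1, hb1]; simp⟩
      · -- u = a' ++ c', γ = c' ++ t
        rcases List.eq_nil_or_concat a' with rfl | ⟨b, x, rfl⟩
        · exact Or.inr (Or.inl ⟨[a], t, by simp [hc1, hc2]⟩)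
        · have h1' : γ ++ [a] = (s ++ b) ++ [x] := by rw [h1]; simp
          obtain ⟨hγ, hx⟩ := List.append_inj' h1' rfl
          have hx' : x = a := by simpa using hx.symm
          subst hx'
          rcases eq_or_ne b [] with rfl | hb
          · exact Or.inr (Or.inl ⟨[], t, by simp [hc1, hc2]⟩)
          · rcases eq_or_ne c' [] with rfl | hc
            · exact Or.inl ⟨s, [], by rw [hc1]; simp [h1]⟩
            · exact Or.inr (Or.inr ⟨b, c', hb, hc, ⟨s, hγ.symm⟩, ⟨t, hc2.symm⟩,
                by rw [hc1]; simp⟩)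
    · exact Or.inl ⟨c', t ++ [a], by rw [h2]; simp⟩
  rcases key with ⟨s', t', h⟩ | ⟨s', t', h⟩ | ⟨γ₁, γ₂, h1, h2, h3, h4, h5⟩
  · exact absurd huL (hred _ hmem u ⟨[a] ++ s', t' ++ δ, by have := congrArg (fun l => [a] ++ l ++ δ) h; simpa using this.symm, by simp⟩)
  · exact absurd huL (hred _ hmem u ⟨s', t' ++ [a] ++ δ, by have := congrArg (fun l => l ++ ([a] ++ δ)) h; simpa using this.symm, by simp⟩)
  · exact ⟨γ₁, γ₂, h1, h2, h3, h4, h5 ▸ huL⟩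
end

section
/- Let L' be a reduced language containing the words aγaδ with δ ≠ ε, and γ₁aγ₂ with γ₁ ≠ ε, γ₂ ≠ ε, where γ₁ is a suffix of γ. Then L' is four-legged: there exist a letter x and nonempty words α, β, γ', δ' with αxβ ∈ L', γ'xδ' ∈ L', αxδ' ∉ L'. -/
theorem fourLegged_of_suffix_word {A : Type*} (L' : Set (List A))
    (hred : Reduced L')
    (a : A) (γ δ γ₁ γ₂ : List A)
    (h1 : [a] ++ γ ++ [a] ++ δ ∈ L') (hδ : δ ≠ [])
    (h2 : γ₁ ++ [a] ++ γ₂ ∈ L') (hγ₁ : γ₁ ≠ []) (hγ₂ : γ₂ ≠ [])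
    (hsuf : γ₁ <:+ γ) :
    FourLegged L' := by
  refine ⟨hred, a, [a] ++ γ, δ, γ₁, γ₂, by simp, hδ, hγ₁, hγ₂, by simpa using h1, h2, ?_⟩
  intro hmem
  obtain ⟨σ, rfl⟩ := hsuf
  exact hred _ hmem (γ₁ ++ [a] ++ γ₂) ⟨[a] ++ σ, [], by simp, by simp⟩ h2
end

section
/- Let L be a reduced language containing the words ηη'aη″η and aη″ηη'a, where a is a letter and η, η', η″ are words with η ≠ ε. If η' ≠ ε or η″ ≠ ε, then L is four-legged. -/
theorem fourLegged_of_overlap {A : Type*} (L : Set (List A))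
    (hred : Reduced L)
    (a : A) (η η' η'' : List A) (hη : η ≠ [])
    (h1 : η ++ η' ++ [a] ++ η'' ++ η ∈ L)
    (h2 : [a] ++ η'' ++ η ++ η' ++ [a] ∈ L)
    (hne : η' ≠ [] ∨ η'' ≠ []) :
    FourLegged L := by
  refine ⟨hred, ?_⟩
  rcases hne with hη' | hη''
  · obtain ⟨c, ρ, rfl⟩ := List.exists_cons_of_ne_nil hη'
    refine ⟨c, η, ρ ++ [a] ++ η'' ++ η, [a] ++ η'' ++ η, ρ ++ [a],
      hη, by simp, by simp, by simp, ?_, ?_, ?_⟩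
    · simpa [List.append_assoc] using h1
    · simpa [List.append_assoc] using h2
    · exact hred _ h1 (η ++ [c] ++ (ρ ++ [a]))
        ⟨[], η'' ++ η, by simp, by simp [hη]⟩
  · obtain ⟨σ, c, rfl⟩ := (List.eq_nil_or_concat' η'').resolve_left hη''
    refine ⟨c, η ++ η' ++ [a] ++ σ, η, [a] ++ σ, η ++ η' ++ [a],
      by simp [hη], hη, by simp, by simp [hη], ?_, ?_, ?_⟩
    · simpa [List.append_assoc] using h1
    · simpa [List.append_assoc] using h2
    · intro hmem
      exact hred _ hmem (η ++ η' ++ [a] ++ (σ ++ [c]) ++ η)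
        ⟨[], η' ++ [a], by simp, by simp⟩ h1
end

section
/- Let L be a reduced language containing the word α = aγ₂ηγ₁a and the word α' = γ₁aγ₂, where a is a letter and γ₁, γ₂, η are words with γ₁ ≠ ε and γ₂ ≠ ε. If |γ₁| ≥ 2 or |γ₂| ≥ 2, then L is four-legged. -/
theorem fourLegged_of_long_gamma {A : Type*} (L : Set (List A))
    (hred : Reduced L)
    (a : A) (γ₁ γ₂ η : List A)
    (h1 : [a] ++ γ₂ ++ η ++ γ₁ ++ [a] ∈ L)
    (h2 : γ₁ ++ [a] ++ γ₂ ∈ L)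
    (hγ₁ : γ₁ ≠ []) (hγ₂ : γ₂ ≠ [])
    (hlong : 2 ≤ γ₁.length ∨ 2 ≤ γ₂.length) :
    FourLegged L := by
  refine ⟨hred, ?_⟩
  rcases hlong with h | h
  · obtain ⟨u, x, rfl⟩ : ∃ u x, γ₁ = u ++ [x] := by
      rcases γ₁.eq_nil_or_concat with h' | ⟨u, x, h'⟩
      · exact absurd h' hγ₁
      · exact ⟨u, x, by simpa using h'⟩
    have hu : u ≠ [] := by
      rintro rfl; simp at h
    refine ⟨x, u, [a] ++ γ₂, [a] ++ γ₂ ++ η ++ u, [a], hu, by simp, by simp, by simp,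
      ?_, ?_, ?_⟩
    · simpa [List.append_assoc] using h2
    · simpa [List.append_assoc] using h1
    · intro hmem
      exact hred _ h2 (u ++ [x] ++ [a])
        ⟨[], γ₂, by simp, by simpa using hγ₂⟩
        (by simpa [List.append_assoc] using hmem)
  · obtain ⟨x, v, rfl⟩ : ∃ x v, γ₂ = x :: v := by
      cases γ₂ with
      | nil => exact absurd rfl hγ₂
      | cons x v => exact ⟨x, v, rfl⟩
    have hv : v ≠ [] := by
      rintro rfl; simp at h
    refine ⟨x, [a], v ++ η ++ γ₁ ++ [a], γ₁ ++ [a], v, by simp, by simp, by simp, hv,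
      ?_, ?_, ?_⟩
    · simpa [List.append_assoc] using h1
    · simpa [List.append_assoc] using h2
    · intro hmem
      exact hred _ h1 ([a] ++ [x] ++ v)
        ⟨[], η ++ γ₁ ++ [a], by simp, by simp⟩
        (by simpa [List.append_assoc] using hmem)
end

section
/- Let L be a language with a neutral letter e whose reduced language L' = red(L) is not letter-Cartesian. Then either L' is four-legged, or there is a letter x ∈ Σ with xx ∈ L'. -/
namespace NLAux

variable {A : Type*}

lemma split3 {a b s u t : List A} (h : s ++ u ++ t = a ++ b) :
    (∃ t', a = s ++ u ++ t' ∧ t = t' ++ b) ∨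
    (∃ s', b = s' ++ u ++ t ∧ s = a ++ s') ∨
    (∃ a₂ b₁, u = a₂ ++ b₁ ∧ a = s ++ a₂ ∧ b = b₁ ++ t) := by
  rcases List.append_eq_append_iff.mp h with ⟨k, hk1, hk2⟩ | ⟨k, hk1, hk2⟩
  · exact Or.inl ⟨k, by rw [hk1, List.append_assoc], hk2⟩
  · rcases List.append_eq_append_iff.mp hk1 with ⟨m, hm1, hm2⟩ | ⟨m, hm1, hm2⟩
    · exact Or.inr (Or.inr ⟨m, k, hm2, hm1, hk2⟩)
    · exact Or.inr (Or.inl ⟨m, by rw [hk2, hm2, List.append_assoc], hm1⟩)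

lemma red_mem {L : Set (List A)} {w : List A} (h : w ∈ red L) : w ∈ L := h.1

lemma red_nsi {L : Set (List A)} {w u : List A} (h : w ∈ red L)
    (hu : StrictInfix u w) : u ∉ L := h.2 u hu

lemma reduced_red (L : Set (List A)) : Reduced (red L) :=
  fun w hw u hu hmem => hw.2 u hu hmem.1

variable {L : Set (List A)} {e : A}

lemma insertE (hneutral : ∀ α β : List A, α ++ β ∈ L ↔ α ++ [e] ++ β ∈ L)
    (hε : ([] : List A) ∉ L) {u v : List A} (hu : u ≠ []) (hv : v ≠ [])
    (h : u ++ v ∈ red L) : u ++ [e] ++ v ∈ red L := by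
  refine ⟨(hneutral u v).mp h.1, ?_⟩
  rintro w ⟨s, t, heq, hst⟩
  have heq' : s ++ w ++ t = u ++ ([e] ++ v) := by
    rw [← heq]; simp
  rcases split3 heq' with ⟨t', h1, h2⟩ | ⟨s', h1, h2⟩ | ⟨a₂, b₁, hw, ha, hb⟩
  · -- w inside u
    exact h.2 w ⟨s, t' ++ v, by rw [h1]; simp, by simp [hv]⟩
  · -- w inside [e] ++ v
    rcases split3 h1.symm with ⟨t₂, g1, g2⟩ | ⟨s₂, g1, g2⟩ | ⟨a₂, b₁, hw, ha, hb⟩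
    · -- w inside [e] : w = [] or w = [e]
      have hcase : w = [] ∨ w = [e] := by
        cases w with
        | nil => exact Or.inl rfl
        | cons y w' =>
          have hlen := congrArg List.length g1
          simp at hlen
          have hs0 : s' = [] := List.length_eq_zero_iff.mp (by omega)
          have hw0 : w' = [] := List.length_eq_zero_iff.mp (by omega)
          subst hs0; subst hw0
          have g1' : e = y ∧ t₂ = [] := by simpa using g1
          exact Or.inr (by rw [← g1'.1])
      rcases hcase with rfl | rfl
      · exact hε
      · intro hwL
        exact hε ((hneutral [] []).mpr (by simpa using hwL))
    · -- w inside v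
      exact h.2 w ⟨u ++ s₂, t, by rw [g1]; simp, by simp [hu]⟩
    · -- w = a₂ ++ b₁, [e] = s' ++ a₂, v = b₁ ++ t
      by_cases hs' : s' = []
      · subst hs'
        have ha' : a₂ = [e] := by simpa using ha.symm
        subst ha'
        intro hwL
        have h' : ([] : List A) ++ [e] ++ b₁ ∈ L := by
          have : w = [] ++ [e] ++ b₁ := by simp [hw]
          rwa [← this]
        have hb₁ : b₁ ∈ L := by simpa using (hneutral [] b₁).mpr h'
        exact h.2 b₁ ⟨u, t, by rw [hb]; simp, by simp [hu]⟩ hb₁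
      · have ha₂ : a₂ = [] := by
          have hlen := congrArg List.length ha
          simp at hlen
          have : s'.length ≠ 0 := fun hh => hs' (List.length_eq_zero_iff.mp hh)
          exact List.length_eq_zero_iff.mp (by omega)
        subst ha₂
        have hw' : w = b₁ := by simpa using hw
        subst hw'
        exact h.2 w ⟨u, t, by rw [hb]; simp, by simp [hu]⟩
  · -- w = a₂ ++ b₁, u = s ++ a₂, [e] ++ v = b₁ ++ t
    cases b₁ with
    | nil =>
      have hw' : w = a₂ := by simpa using hw
      subst hw'
      exact h.2 w ⟨s, v, by simp [ha], by simp [hv]⟩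
    | cons y b₁' =>
      have hb' : e = y ∧ v = b₁' ++ t := by
        have : e :: v = y :: (b₁' ++ t) := by simpa using hb
        exact ⟨(List.cons.injEq _ _ _ _ ▸ this).1, (List.cons.injEq _ _ _ _ ▸ this).2⟩
      intro hwL
      have hL : a₂ ++ b₁' ∈ L := by
        apply (hneutral a₂ b₁').mpr
        have hwe : w = a₂ ++ [e] ++ b₁' := by rw [hw, ← hb'.1]; simp
        rwa [← hwe]
      exact h.2 (a₂ ++ b₁') ⟨s, t, by rw [ha, hb'.2]; simp, hst⟩ hL

lemma comboG (hneutral : ∀ α β : List A, α ++ β ∈ L ↔ α ++ [e] ++ β ∈ L)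
    {a c d β : List A} (hβ : β ≠ []) (hc : c ≠ [])
    (h1 : a ++ β ∈ red L) (h2 : c ++ d ∈ red L) (h3 : a ++ [e] ++ d ∈ red L)
    (hm : a ++ d ∈ L) : a ++ d ∈ red L := by
  refine ⟨hm, ?_⟩
  rintro w ⟨s, t, heq, hst⟩
  rcases split3 (heq.symm : s ++ w ++ t = a ++ d) with
    ⟨t', g1, g2⟩ | ⟨s', g1, g2⟩ | ⟨a₂, b₁, hw, ha, hd⟩
  · exact h1.2 w ⟨s, t' ++ β, by rw [g1]; simp, by simp [hβ]⟩
  · exact h2.2 w ⟨c ++ s', t, by rw [g1]; simp, by simp [hc]⟩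
  · intro hwL
    have he : a₂ ++ [e] ++ b₁ ∈ L := (hneutral a₂ b₁).mp (by rw [← hw]; exact hwL)
    exact h3.2 (a₂ ++ [e] ++ b₁) ⟨s, t, by rw [ha, hd]; simp, hst⟩ he

lemma combine {p q r s : List A} (hp : p ≠ []) (hq : q ≠ []) (hr : r ≠ []) (hs : s ≠ [])
    (h1 : p ++ [e] ++ q ∈ red L) (h2 : r ++ [e] ++ s ∈ red L) :
    FourLegged (red L) ∨ p ++ [e] ++ s ∈ red L := by
  by_cases h : p ++ [e] ++ s ∈ red L
  · exact Or.inr h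
  · exact Or.inl ⟨reduced_red L, e, p, q, r, s, hp, hq, hr, hs, h1, h2, h⟩

lemma xx_red (hneutral : ∀ α β : List A, α ++ β ∈ L ↔ α ++ [e] ++ β ∈ L)
    (hε : ([] : List A) ∉ L) {x : A} (hx : [x] ∉ L)
    (h : [x] ++ [e] ++ [x] ∈ red L) : [x, x] ∈ red L := by
  have hmem : [x, x] ∈ L := by
    have := (hneutral [x] [x]).mpr h.1
    simpa using this
  refine ⟨hmem, ?_⟩
  rintro u ⟨s, t, heq, hst⟩
  cases u with
  | nil => exact hε
  | cons y u' =>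
    cases u' with
    | nil =>
      have hy : y = x := by
        have : y ∈ ([x, x] : List A) := by rw [heq]; simp
        simpa using this
      rw [hy]; exact hx
    | cons z u'' =>
      exfalso
      have hlen := congrArg List.length heq
      simp at hlen
      have hstl : s.length + t.length ≠ 0 := by
        intro hh
        apply hst
        have hs0 : s = [] := List.length_eq_zero_iff.mp (by omega)
        have ht0 : t = [] := List.length_eq_zero_iff.mp (by omega)
        rw [hs0, ht0]; rfl
      omega

end NLAux

open NLAux in
theorem neutral_nonlocal_dichotomy {A : Type*} (L : Set (List A)) (e : A)
    (hneutral : ∀ α β : List A, α ++ β ∈ L ↔ α ++ [e] ++ β ∈ L)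
    (hnotlc : ¬ LetterCartesian (red L)) :
    FourLegged (red L) ∨ ∃ x : A, [x, x] ∈ red L := by
  rw [LetterCartesian] at hnotlc
  push_neg at hnotlc
  obtain ⟨x, α, β, γ, δ, h1, h2, hC⟩ := hnotlc
  have hε : ([] : List A) ∉ L := fun hnil =>
    h1.2 [] ⟨α, [x] ++ β, by simp, by simp⟩ hnil
  by_cases hα : α = []
  · subst hα
    simp only [List.nil_append] at h1 hC
    have hγ : γ ≠ [] := by
      rintro rfl
      simp only [List.nil_append] at h2
      exact hC h2
    by_cases hδ : δ = []
    · subst hδ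
      simp only [List.append_nil] at h2 hC
      have hβ : β ≠ [] := by
        rintro rfl
        simp only [List.append_nil] at h1
        exact hC h1
      have d1 : [x] ++ [e] ++ β ∈ red L := insertE hneutral hε (by simp) hβ h1
      have d2 : γ ++ [e] ++ [x] ∈ red L := insertE hneutral hε hγ (by simp) h2
      rcases combine (by simp) hβ hγ (by simp) d1 d2 with hf | hcomb
      · exact Or.inl hf
      · have hxL : [x] ∉ L := red_nsi h1 ⟨[], β, by simp, by simp [hβ]⟩
        exact Or.inr ⟨x, xx_red hneutral hε hxL hcomb⟩
    · by_cases hβ : β = []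
      · subst hβ
        simp only [List.append_nil] at h1
        have d1 : (γ ++ [x]) ++ [e] ++ δ ∈ red L := insertE hneutral hε (by simp) hδ h2
        have d2 : γ ++ [e] ++ ([x] ++ δ) ∈ red L :=
          insertE hneutral hε hγ (by simp) (by simpa using h2)
        rcases combine (by simp) hδ hγ (by simp) d1 d2 with hf | hcomb
        · exact Or.inl hf
        · exfalso
          exact red_nsi hcomb (u := [x]) ⟨γ, [e] ++ [x] ++ δ, by simp, by simp⟩ h1.1
      · have d1 : [x] ++ [e] ++ β ∈ red L := insertE hneutral hε (by simp) hβ h1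
        have d2 : (γ ++ [x]) ++ [e] ++ δ ∈ red L := insertE hneutral hε (by simp) hδ h2
        rcases combine (by simp) hβ (show γ ++ [x] ≠ [] by simp) hδ d1 d2 with hf | hcomb
        · exact Or.inl hf
        · exfalso
          have hmem : [x] ++ δ ∈ L := (hneutral [x] δ).mpr hcomb.1
          exact hC (comboG hneutral hβ (show γ ++ [x] ≠ [] by simp) h1 h2 hcomb hmem)
  · by_cases hδ : δ = []
    · subst hδ
      simp only [List.append_nil] at h2 hC
      have hβ : β ≠ [] := by
        rintro rfl
        simp only [List.append_nil] at h1
        exact hC h1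
      by_cases hγ : γ = []
      · subst hγ
        simp only [List.nil_append] at h2
        have d1 : (α ++ [x]) ++ [e] ++ β ∈ red L := insertE hneutral hε (by simp) hβ h1
        have d2 : α ++ [e] ++ ([x] ++ β) ∈ red L :=
          insertE hneutral hε hα (by simp) (by simpa using h1)
        rcases combine (show α ++ [x] ≠ [] by simp) hβ hα (by simp) d1 d2 with hf | hcomb
        · exact Or.inl hf
        · exfalso
          exact red_nsi hcomb (u := [x]) ⟨α, [e] ++ [x] ++ β, by simp, by simp⟩ h2.1
      · have d1 : α ++ [e] ++ ([x] ++ β) ∈ red L :=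
          insertE hneutral hε hα (by simp) (by simpa using h1)
        have d2 : γ ++ [e] ++ [x] ∈ red L := insertE hneutral hε hγ (by simp) h2
        rcases combine hα (by simp) hγ (by simp) d1 d2 with hf | hcomb
        · exact Or.inl hf
        · exfalso
          have hmem : α ++ [x] ∈ L := (hneutral α [x]).mpr hcomb.1
          exact hC (comboG hneutral (show [x] ++ β ≠ [] by simp) hγ
            (by simpa using h1) h2 hcomb hmem)
    · by_cases hβ : β = []
      · subst hβ
        simp only [List.append_nil] at h1
        by_cases hγ : γ = []
        · subst hγ
          simp only [List.nil_append] at h2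
          have d1 : α ++ [e] ++ [x] ∈ red L := insertE hneutral hε hα (by simp) h1
          have d2 : [x] ++ [e] ++ δ ∈ red L := insertE hneutral hε (by simp) hδ h2
          rcases combine (show ([x] : List A) ≠ [] by simp) hδ hα (by simp) d2 d1 with hf | hcomb
          · exact Or.inl hf
          · have hxL : [x] ∉ L := red_nsi h1 ⟨α, [], by simp, by simp [hα]⟩
            exact Or.inr ⟨x, xx_red hneutral hε hxL hcomb⟩
        · have d1 : α ++ [e] ++ [x] ∈ red L := insertE hneutral hε hα (by simp) h1
          have d2 : γ ++ [e] ++ ([x] ++ δ) ∈ red L :=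
            insertE hneutral hε hγ (by simp) (by simpa using h2)
          rcases combine hα (by simp) hγ (by simp) d1 d2 with hf | hcomb
          · exact Or.inl hf
          · exfalso
            have hL : α ++ [e] ++ [x] ∈ L := (hneutral α [x]).mp h1.1
            exact red_nsi hcomb (u := α ++ [e] ++ [x]) ⟨[], δ, by simp, by simp [hδ]⟩ hL
      · by_cases hγ : γ = []
        · subst hγ
          simp only [List.nil_append] at h2
          have d1 : (α ++ [x]) ++ [e] ++ β ∈ red L := insertE hneutral hε (by simp) hβ h1
          have d2 : [x] ++ [e] ++ δ ∈ red L := insertE hneutral hε (by simp) hδ h2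
          rcases combine (show α ++ [x] ≠ [] by simp) hβ (show ([x] : List A) ≠ [] by simp)
            hδ d1 d2 with hf | hcomb
          · exact Or.inl hf
          · exfalso
            have hmem : (α ++ [x]) ++ δ ∈ L := (hneutral (α ++ [x]) δ).mpr hcomb.1
            exact hC (comboG hneutral hβ (show ([x] : List A) ≠ [] by simp) h1 h2 hcomb hmem)
        · exact Or.inl ⟨reduced_red L, x, α, β, γ, δ, hα, hβ, hγ, hδ, h1, h2, hC⟩
end

section
/- A chain language over a finite alphabet Σ contains at most |Σ| words of length at least 3; in particular, every chain language over a finite alphabet is finite. -/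
def ChainLang {A : Type*} (L : Set (List A)) : Prop :=
  (∀ w ∈ L, ¬ ∃ (β γ δ : List A) (a : A), w = β ++ [a] ++ γ ++ [a] ++ δ) ∧
  (∀ (a b : A) (γ : List A), [a] ++ γ ++ [b] ∈ L →
    ∀ c ∈ γ, ∀ w ∈ L, w ≠ [a] ++ γ ++ [b] → c ∉ w)

lemma chain_decomp {A : Type*} (l : List A) (h : 3 ≤ l.length) :
    ∃ a c γ b, l = [a] ++ (c :: γ) ++ [b] := by
  match l with
  | a :: c :: rest =>
    have hr : rest ≠ [] := by
      simp only [List.length_cons] at h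
      intro hnil; simp [hnil] at h
    obtain hnil | ⟨γ, b, rfl⟩ := rest.eq_nil_or_concat
    · exact absurd hnil hr
    · exact ⟨a, c, γ, b, by simp⟩

theorem chain_lang_finite {A : Type*} [Fintype A] (L : Set (List A))
    (hchain : ChainLang L) :
    {w ∈ L | 3 ≤ w.length}.Finite ∧
    {w ∈ L | 3 ≤ w.length}.ncard ≤ Fintype.card A ∧
    L.Finite := by
  set S := {w ∈ L | 3 ≤ w.length} with hS
  have hinj : Set.InjOn (fun w : List A => w[1]?) S := by
    rintro w ⟨hwL, hwl⟩ w' ⟨hw'L, hw'l⟩ heq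
    by_contra hne
    obtain ⟨a, c, γ, b, rfl⟩ := chain_decomp w hwl
    have h1 : ([a] ++ (c :: γ) ++ [b])[1]? = some c := by simp
    have hcw' : c ∈ w' := by
      have h2 : w'[1]? = some c := by
        simpa [h1] using heq.symm
      obtain ⟨hlt, hget⟩ := List.getElem?_eq_some_iff.mp h2
      exact hget ▸ List.getElem_mem hlt
    exact hchain.2 a b (c :: γ) hwL c List.mem_cons_self w' hw'L
      (Ne.symm hne) hcw'
  have hSfin : S.Finite :=
    Set.Finite.of_finite_image (Set.toFinite _) hinj
  have hsub : (fun w : List A => w[1]?) '' S ⊆ some '' Set.univ := by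
    rintro _ ⟨w, ⟨hwL, hwl⟩, rfl⟩
    obtain ⟨a, c, γ, b, rfl⟩ := chain_decomp w hwl
    exact ⟨c, trivial, by simp⟩
  have hcard : S.ncard ≤ Fintype.card A := by
    calc S.ncard = ((fun w : List A => w[1]?) '' S).ncard :=
          (Set.ncard_image_of_injOn hinj).symm
      _ ≤ (some '' (Set.univ : Set A)).ncard :=
          Set.ncard_le_ncard hsub (Set.toFinite _)
      _ = (Set.univ : Set A).ncard :=
          Set.ncard_image_of_injective _ (Option.some_injective A)
      _ = Fintype.card A := by
          rw [Set.ncard_univ, Nat.card_eq_fintype_card]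
  refine ⟨hSfin, hcard, ?_⟩
  have : L ⊆ S ∪ {w : List A | w.length ≤ 2} := by
    intro w hw
    by_cases h3 : 3 ≤ w.length
    · exact Or.inl ⟨hw, h3⟩
    · exact Or.inr (show w.length ≤ 2 by omega)
  exact Set.Finite.subset (hSfin.union (List.finite_length_le A 2)) this
end

section
/- Let L be a language containing a word α = βaγaδ with a repeated letter a. If L is letter-Cartesian, then for every n ≥ 1 the word βa(γa)ⁿδ is in L; in particular L is infinite. -/
theorem letterCartesian_pump {A : Type*} (L : Set (List A))
    (a : A) (β γ δ : List A)
    (hmem : β ++ [a] ++ γ ++ [a] ++ δ ∈ L)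
    (hlc : LetterCartesian L) :
    (∀ n : ℕ, 1 ≤ n →
      β ++ [a] ++ (List.replicate n (γ ++ [a])).flatten ++ δ ∈ L) ∧
    L.Infinite := by
  have key : ∀ n : ℕ, 1 ≤ n →
      β ++ [a] ++ (List.replicate n (γ ++ [a])).flatten ++ δ ∈ L := by
    intro n hn
    induction n with
    | zero => omega
    | succ m ih =>
      rcases Nat.eq_zero_or_pos m with hm | hm
      · subst hm
        simpa [List.append_assoc] using hmem
      · have hprev := ih hm
        have h1 : (β ++ [a] ++ γ) ++ [a] ++ δ ∈ L := by
          simpa [List.append_assoc] using hmem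
        have h2 : β ++ [a] ++ ((List.replicate m (γ ++ [a])).flatten ++ δ) ∈ L := by
          simpa [List.append_assoc] using hprev
        have := hlc a (β ++ [a] ++ γ) δ β
          ((List.replicate m (γ ++ [a])).flatten ++ δ) h1 h2
        simpa [List.replicate_succ, List.append_assoc] using this
  refine ⟨key, ?_⟩
  apply Set.infinite_of_injective_forall_mem
    (f := fun n : ℕ => β ++ [a] ++ (List.replicate (n+1) (γ ++ [a])).flatten ++ δ)
  · intro m n h
    have hl := congrArg List.length h
    simp [List.length_append, List.length_flatten, Nat.mul_comm] at hl
    omega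
  · intro n
    exact key (n+1) (by omega)
end

section
/- Let L be a regular language that is not star-free in the sense that for every k > 0 there exist words ρ, σ, τ and m ≥ k such that exactly one of ρσᵏτ and ρσᵐτ belongs to L. If L is reduced, then L is four-legged. -/
private lemma ivt (g : ℕ → Prop) : ∀ b a, a ≤ b → ¬ g a → g b →
    ∃ n, a ≤ n ∧ ¬ g n ∧ g (n + 1) := by
  intro b
  induction b with
  | zero =>
    intro a ha hga hgb
    exact absurd hgb (by rwa [Nat.le_zero.mp ha] at hga)
  | succ b ih =>
    intro a ha hga hgb
    rcases Nat.eq_or_lt_of_le ha with h | h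
    · exact absurd hgb (by rwa [h] at hga)
    · have hab : a ≤ b := Nat.lt_succ_iff.mp h
      by_cases hb : g b
      · exact ih a hab hga hb
      · exact ⟨b, hab, hb, hgb⟩

private lemma orbit_period {S : Type} [Fintype S] (f : S → S) (q : S) :
    ∀ a, Fintype.card S ≤ a →
      f^[a + (Fintype.card S).factorial] q = f^[a] q := by
  set s := Fintype.card S with hs
  -- pigeonhole on the orbit
  have hcard : Fintype.card S < Fintype.card (Fin (s + 1)) := by simp; exact hs.symm.le
  obtain ⟨i, j, hij, heq⟩ :=
    Fintype.exists_ne_map_eq_of_card_lt (fun i : Fin (s + 1) => f^[(i : ℕ)] q) hcard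
  -- wlog i < j
  wlog hlt : (i : ℕ) < (j : ℕ) generalizing i j
  · exact this j i hij.symm heq.symm (by have := Fin.val_ne_of_ne hij; omega)
  · obtain ⟨p, hp⟩ : ∃ p, (j : ℕ) = (i : ℕ) + p := ⟨j - i, by omega⟩
    have hp1 : 1 ≤ p := by omega
    have hps : p ≤ s := by have := j.2; omega
    have step : ∀ t, f^[(i : ℕ) + t + p] q = f^[(i : ℕ) + t] q := by
      intro t
      calc f^[(i : ℕ) + t + p] q
          = f^[t + ((i : ℕ) + p)] q := by rw [show (i : ℕ) + t + p = t + ((i : ℕ) + p) by omega]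
        _ = f^[t] (f^[(i : ℕ) + p] q) := Function.iterate_add_apply f t _ q
        _ = f^[t] (f^[(i : ℕ)] q) := by rw [← hp, ← heq]
        _ = f^[t + (i : ℕ)] q := (Function.iterate_add_apply f t _ q).symm
        _ = f^[(i : ℕ) + t] q := by rw [Nat.add_comm]
    have mult : ∀ c t, f^[(i : ℕ) + t + c * p] q = f^[(i : ℕ) + t] q := by
      intro c
      induction c with
      | zero => intro t; simp
      | succ c ih =>
        intro t
        have h1 : (i : ℕ) + t + (c + 1) * p = (i : ℕ) + (t + c * p) + p := by ring
        rw [h1, step (t + c * p)]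
        have h2 : (i : ℕ) + (t + c * p) = (i : ℕ) + t + c * p := by ring
        rw [h2, ih t]
    intro a ha
    obtain ⟨c, hc⟩ := Nat.dvd_factorial hp1 hps
    obtain ⟨t, ht⟩ : ∃ t, a = (i : ℕ) + t := ⟨a - i, by have := i.2; omega⟩
    have h1 : a + s.factorial = (i : ℕ) + t + c * p := by rw [ht, hc, Nat.mul_comm]
    rw [h1, mult c t, ← ht]

private lemma evalFrom_flatten {A : Type*} {S : Type} (M : DFA A S) (σ : List A) :
    ∀ (j : ℕ) (q : S), M.evalFrom q (List.replicate j σ).flatten =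
      (fun q => M.evalFrom q σ)^[j] q := by
  intro j
  induction j with
  | zero => intro q; simp [DFA.evalFrom]
  | succ j ih =>
    intro q
    rw [List.replicate_succ, List.flatten_cons, DFA.evalFrom_of_append,
      Function.iterate_succ_apply]
    exact ih _


theorem non_star_free_fourLegged {A : Type*} (L : Set (List A))
    (hreg : ∃ (S : Type) (_ : Fintype S) (M : DFA A S),
      (M.accepts : Set (List A)) = L)
    (hnsf : ∀ k : ℕ, 0 < k → ∃ (ρ σ τ : List A) (m : ℕ), k ≤ m ∧
      Xor' (ρ ++ (List.replicate k σ).flatten ++ τ ∈ L)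
           (ρ ++ (List.replicate m σ).flatten ++ τ ∈ L))
    (hred : Reduced L) :
    FourLegged L := by
  refine ⟨hred, ?_⟩
  obtain ⟨S, _, M, hM⟩ := hreg
  set s := Fintype.card S with hs
  set P := s.factorial with hP
  have hP1 : 1 ≤ P := Nat.factorial_pos s
  set k := s + P + 5 with hk
  obtain ⟨ρ, σ, τ, m, hm, hxor⟩ := hnsf k (by omega)
  set g : ℕ → Prop := fun j => ρ ++ (List.replicate j σ).flatten ++ τ ∈ L with hgdef
  -- σ is nonempty
  have hσ : σ ≠ [] := by
    intro h
    subst h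
    have hflat : ∀ j, (List.replicate j ([] : List A)).flatten = [] := by
      intro j; induction j with
      | zero => simp
      | succ j ih => simp [List.replicate_succ, ih]
    rw [hflat k, hflat m] at hxor
    rcases hxor with ⟨h1, h2⟩ | ⟨h1, h2⟩ <;> exact h2 h1
  -- periodicity of g
  set q0 := M.evalFrom M.start ρ with hq0
  set f : S → S := fun q => M.evalFrom q σ with hf
  have hg : ∀ j, g j ↔ M.evalFrom (f^[j] q0) τ ∈ M.accept := by
    intro j
    rw [hgdef]
    simp only
    rw [← hM]
    change (ρ ++ (List.replicate j σ).flatten ++ τ) ∈ M.accepts ↔ _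
    rw [DFA.mem_accepts, DFA.eval, DFA.evalFrom_of_append, DFA.evalFrom_of_append,
      evalFrom_flatten]
  have hper : ∀ a, s ≤ a → (g (a + P) ↔ g a) := by
    intro a ha
    rw [hg, hg, orbit_period f q0 a ha]
  have hperc : ∀ c a, s ≤ a → (g (a + c * P) ↔ g a) := by
    intro c
    induction c with
    | zero => intro a _; simp
    | succ c ih =>
      intro a ha
      have h1 : a + (c + 1) * P = (a + c * P) + P := by ring
      rw [h1, hper _ (by omega), ih a ha]
  -- get a false point and a true point, both ≥ k
  obtain ⟨a, b, hka, hkb, hga, hgb⟩ :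
      ∃ a b, k ≤ a ∧ k ≤ b ∧ ¬ g a ∧ g b := by
    rcases hxor with ⟨h1, h2⟩ | ⟨h1, h2⟩
    · exact ⟨m, k, hm, le_refl k, h2, h1⟩
    · exact ⟨k, m, le_refl k, hm, h2, h1⟩
  -- lift b above a by periodicity
  have hgb' : g (b + a * P) := (hperc a b (by omega)).mpr hgb
  have hab : a ≤ b + a * P := by nlinarith
  obtain ⟨n, hn, hgn, hgn1⟩ := ivt g (b + a * P) a hab hga hgb'
  -- now n ≥ k ≥ 5, so n = t + 3 for some t ≥ 2
  obtain ⟨t, ht⟩ : ∃ t, n = t + 3 := ⟨n - 3, by omega⟩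
  have hIn : ρ ++ (List.replicate (t + 4) σ).flatten ++ τ ∈ L := by
    have h := hgn1; rw [ht] at h; exact h
  have hOut : ρ ++ (List.replicate (t + 3) σ).flatten ++ τ ∉ L := by
    have h := hgn; rw [ht] at h; exact h
  obtain ⟨x, σ', hxσ⟩ := List.exists_cons_of_ne_nil hσ
  have e1 : (ρ ++ σ) ++ [x] ++ (σ' ++ (List.replicate (t + 2) σ).flatten ++ τ)
      = ρ ++ (List.replicate (t + 4) σ).flatten ++ τ := by
    simp [hxσ, List.replicate_succ]
  have e2 : (ρ ++ σ ++ σ) ++ [x] ++ (σ' ++ (List.replicate (t + 1) σ).flatten ++ τ)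
      = ρ ++ (List.replicate (t + 4) σ).flatten ++ τ := by
    simp [hxσ, List.replicate_succ]
  have e3 : (ρ ++ σ) ++ [x] ++ (σ' ++ (List.replicate (t + 1) σ).flatten ++ τ)
      = ρ ++ (List.replicate (t + 3) σ).flatten ++ τ := by
    simp [hxσ, List.replicate_succ]
  have hβ : σ' ++ (List.replicate (t + 2) σ).flatten ++ τ ≠ [] := by
    simp [hxσ, List.replicate_succ]
  have hδ : σ' ++ (List.replicate (t + 1) σ).flatten ++ τ ≠ [] := by
    simp [hxσ, List.replicate_succ]
  exact ⟨x, ρ ++ σ, σ' ++ (List.replicate (t + 2) σ).flatten ++ τ,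
    ρ ++ σ ++ σ, σ' ++ (List.replicate (t + 1) σ).flatten ++ τ,
    by simp [hxσ], hβ, by simp [hxσ], hδ,
    e1 ▸ hIn, e2 ▸ hIn, e3 ▸ hOut⟩
end
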